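/- arXiv:0906.3270 — 8 statements merged into one kernel-verified Lean document; each statement's English description precedes it below -/
import Mathlib

section
/- Let (A, ⋆, α) be a hom-associative magma with β : A → A satisfying α ∘ β = id. Then for all a, b, x, y, z ∈ A: a ⋆ (b ⋆ (x ⋆ β(y ⋆ z))) = a ⋆ (b ⋆ (β(x ⋆ y) ⋆ z)). -/
theorem homAssoc_ass1 {A : Type*} (star : A → A → A) (α β : A → A)
    (hassoc : ∀ x y z, star (α x) (star y z) = star (star x y) (α z))
    (hβ : ∀ a, α (β a) = a) :
    ∀ a b x y z, star a (star b (star x (β (star y z)))) =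
      star a (star b (star (β (star x y)) z)) := by
  intro a b x y z
  calc star a (star b (star x (β (star y z))))
      = star (α (α (β (β a)))) (star (α (β b)) (star x (β (star y z)))) := by
        rw [hβ (β a), hβ a, hβ b]
    _ = star (α (α (β (β a)))) (star (star (β b) x) (α (β (star y z)))) := by
        rw [hassoc (β b) x (β (star y z))]
    _ = star (star (α (β (β a))) (star (β b) x)) (α (α (β (star y z)))) := by
        rw [hassoc (α (β (β a))) (star (β b) x) (α (β (star y z)))]
    _ = star (star (star (β (β a)) (β b)) (α x)) (α (α (β (star y z)))) := by
        rw [hassoc (β (β a)) (β b) x]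
    _ = star (α (star (β (β a)) (β b))) (star (α x) (α (β (star y z)))) := by
        rw [hassoc (star (β (β a)) (β b)) (α x) (α (β (star y z)))]
    _ = star (α (star (β (β a)) (β b))) (star (α x) (star y z)) := by
        rw [hβ (star y z)]
    _ = star (α (star (β (β a)) (β b))) (star (star x y) (α z)) := by
        rw [hassoc x y z]
    _ = star (star (star (β (β a)) (β b)) (star x y)) (α (α z)) := by
        rw [hassoc (star (β (β a)) (β b)) (star x y) (α z)]
    _ = star (star (star (β (β a)) (β b)) (α (β (star x y)))) (α (α z)) := by
        rw [hβ (star x y)]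
    _ = star (star (α (β (β a))) (star (β b) (β (star x y)))) (α (α z)) := by
        rw [hassoc (β (β a)) (β b) (β (star x y))]
    _ = star (α (α (β (β a)))) (star (star (β b) (β (star x y))) (α z)) := by
        rw [hassoc (α (β (β a))) (star (β b) (β (star x y))) (α z)]
    _ = star a (star (star (β b) (β (star x y))) (α z)) := by
        rw [hβ (β a), hβ a]
    _ = star a (star (α (β b)) (star (β (star x y)) z)) := by
        rw [hassoc (β b) (β (star x y)) z]
    _ = star a (star b (star (β (star x y)) z)) := by rw [hβ b]
end

section
/- Let (A, ⋆, α) be a hom-associative magma with β : A → A satisfying α ∘ β = id. Then for all a, b, x, y, z ∈ A: a ⋆ ((x ⋆ β(y ⋆ z)) ⋆ b) = a ⋆ ((β(x ⋆ y) ⋆ z) ⋆ b). -/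
theorem homAssoc_ass2 {A : Type*} (star : A → A → A) (α β : A → A)
    (hassoc : ∀ x y z, star (α x) (star y z) = star (star x y) (α z))
    (hβ : ∀ a, α (β a) = a) :
    ∀ a b x y z, star a (star (star x (β (star y z))) b) =
      star a (star (star (β (star x y)) z) b) := by
  intro a b x y z
  have lhs : star a (star (star x (β (star y z))) b) =
      star (star (star (β (β a)) x) (α y)) (α (star z (β b))) := by
    calc star a (star (star x (β (star y z))) b)
        = star (α (β a)) (star (star x (β (star y z))) b) := by rw [hβ]
      _ = star (star (β a) (star x (β (star y z)))) (α b) := hassoc _ _ _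
      _ = star (star (α (β (β a))) (star x (β (star y z)))) (α b) := by rw [hβ]
      _ = star (star (star (β (β a)) x) (α (β (star y z)))) (α b) := by
            rw [hassoc]
      _ = star (star (star (β (β a)) x) (star y z)) (α b) := by rw [hβ]
      _ = star (α (star (β (β a)) x)) (star (star y z) b) := (hassoc _ _ _).symm
      _ = star (α (star (β (β a)) x)) (star (star y z) (α (β b))) := by rw [hβ]
      _ = star (α (star (β (β a)) x)) (star (α y) (star z (β b))) := by
            rw [hassoc y z (β b)]
      _ = star (star (star (β (β a)) x) (α y)) (α (star z (β b))) := hassoc _ _ _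
  have rhs : star a (star (star (β (star x y)) z) b) =
      star (star (star (β (β a)) x) (α y)) (α (star z (β b))) := by
    calc star a (star (star (β (star x y)) z) b)
        = star a (star (star (β (star x y)) z) (α (β b))) := by rw [hβ]
      _ = star a (star (α (β (star x y))) (star z (β b))) := by rw [hassoc]
      _ = star a (star (star x y) (star z (β b))) := by rw [hβ]
      _ = star (α (β a)) (star (star x y) (star z (β b))) := by rw [hβ]
      _ = star (star (β a) (star x y)) (α (star z (β b))) := hassoc _ _ _
      _ = star (star (α (β (β a))) (star x y)) (α (star z (β b))) := by rw [hβ]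
      _ = star (star (star (β (β a)) x) (α y)) (α (star z (β b))) := by
            rw [hassoc]
  rw [lhs, rhs]
end

section
/- Let (A, ⋆, α) be a hom-associative magma with β : A → A satisfying α ∘ β = id. Then for all a, b, x, y, z ∈ A: ((x ⋆ β(y ⋆ z)) ⋆ b) ⋆ a = ((β(x ⋆ y) ⋆ z) ⋆ b) ⋆ a. -/
theorem homAssoc_ass3 {A : Type*} (star : A → A → A) (α β : A → A)
    (hassoc : ∀ x y z, star (α x) (star y z) = star (star x y) (α z))
    (hβ : ∀ a, α (β a) = a) :
    ∀ a b x y z, star (star (star x (β (star y z))) b) a =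
      star (star (star (β (star x y)) z) b) a := by
  intro a b x y z
  have L : star (star (star x (β (star y z))) b) a
      = star (star (star x y) (α z)) (α (star (β b) (β (β a)))) := by
    calc star (star (star x (β (star y z))) b) a
        = star (star (star x (β (star y z))) (α (β b))) a := by
          exact congrArg (fun t => star (star (star x (β (star y z))) t) a) (hβ b).symm
      _ = star (star (α x) (star (β (star y z)) (β b))) a := by
          exact congrArg (fun t => star t a) (hassoc x (β (star y z)) (β b)).symm
      _ = star (star (α x) (star (β (star y z)) (β b))) (α (β a)) := by
          exact congrArg _ (hβ a).symm
      _ = star (α (α x)) (star (star (β (star y z)) (β b)) (β a)) := by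
          exact (hassoc (α x) (star (β (star y z)) (β b)) (β a)).symm
      _ = star (α (α x)) (star (star (β (star y z)) (β b)) (α (β (β a)))) := by
          exact congrArg (fun t => star (α (α x)) (star (star (β (star y z)) (β b)) t)) (hβ (β a)).symm
      _ = star (α (α x)) (star (α (β (star y z))) (star (β b) (β (β a)))) := by
          exact congrArg (star (α (α x))) (hassoc (β (star y z)) (β b) (β (β a))).symm
      _ = star (α (α x)) (star (star y z) (star (β b) (β (β a)))) := by
          rw [hβ]
      _ = star (star (α x) (star y z)) (α (star (β b) (β (β a)))) :=
          hassoc (α x) (star y z) (star (β b) (β (β a)))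
      _ = star (star (star x y) (α z)) (α (star (β b) (β (β a)))) := by
          exact congrArg (fun t => star t (α (star (β b) (β (β a))))) (hassoc x y z)
  have R : star (star (star (β (star x y)) z) b) a
      = star (star (star x y) (α z)) (α (star (β b) (β (β a)))) := by
    calc star (star (star (β (star x y)) z) b) a
        = star (star (star (β (star x y)) z) (α (β b))) a := by
          exact congrArg (fun t => star (star (star (β (star x y)) z) t) a) (hβ b).symm
      _ = star (star (α (β (star x y))) (star z (β b))) a := by
          exact congrArg (fun t => star t a) (hassoc (β (star x y)) z (β b)).symm
      _ = star (star (star x y) (star z (β b))) a := by rw [hβ]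
      _ = star (star (star x y) (star z (β b))) (α (β a)) := by
          exact congrArg _ (hβ a).symm
      _ = star (α (star x y)) (star (star z (β b)) (β a)) :=
          (hassoc (star x y) (star z (β b)) (β a)).symm
      _ = star (α (star x y)) (star (star z (β b)) (α (β (β a)))) := by
          exact congrArg (fun t => star (α (star x y)) (star (star z (β b)) t)) (hβ (β a)).symm
      _ = star (α (star x y)) (star (α z) (star (β b) (β (β a)))) := by
          exact congrArg (star (α (star x y))) (hassoc z (β b) (β (β a))).symm
      _ = star (star (star x y) (α z)) (α (star (β b) (β (β a)))) :=
          hassoc (star x y) (α z) (star (β b) (β (β a)))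
  rw [L, R]
end

section
/- Let (A, ⋆, α) be a hom-associative magma with β : A → A satisfying α ∘ β = id. Then for all a, b, x, y, z ∈ A: (b ⋆ (x ⋆ β(y ⋆ z))) ⋆ a = (b ⋆ (β(x ⋆ y) ⋆ z)) ⋆ a. -/
theorem homAssoc_ass4 {A : Type*} (star : A → A → A) (α β : A → A)
    (hassoc : ∀ x y z, star (α x) (star y z) = star (star x y) (α z))
    (hβ : ∀ a, α (β a) = a) :
    ∀ a b x y z, star (star b (star x (β (star y z)))) a =
      star (star b (star (β (star x y)) z)) a := by
  intro a b x y z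
  calc star (star b (star x (β (star y z)))) a
      = star (star (α (β b)) (star x (β (star y z)))) a := by rw [hβ b]
    _ = star (star (star (β b) x) (α (β (star y z)))) a := by
          rw [hassoc (β b) x (β (star y z))]
    _ = star (star (star (β b) x) (star y z)) a := by rw [hβ (star y z)]
    _ = star (star (star (β b) x) (star y z)) (α (β a)) := by rw [hβ a]
    _ = star (α (star (β b) x)) (star (star y z) (β a)) := by
          rw [hassoc (star (β b) x) (star y z) (β a)]
    _ = star (α (star (β b) x)) (star (star y z) (α (β (β a)))) := by rw [hβ (β a)]
    _ = star (α (star (β b) x)) (star (α y) (star z (β (β a)))) := by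
          rw [hassoc y z (β (β a))]
    _ = star (star (star (β b) x) (α y)) (α (star z (β (β a)))) := by
          rw [hassoc (star (β b) x) (α y) (star z (β (β a)))]
    _ = star (star (α (β b)) (star x y)) (α (star z (β (β a)))) := by
          rw [← hassoc (β b) x y]
    _ = star (α (α (β b))) (star (star x y) (star z (β (β a)))) := by
          rw [← hassoc (α (β b)) (star x y) (star z (β (β a)))]
    _ = star (α b) (star (star x y) (star z (β (β a)))) := by rw [hβ b]
    _ = star (α b) (star (α (β (star x y))) (star z (β (β a)))) := by
          rw [hβ (star x y)]
    _ = star (α b) (star (star (β (star x y)) z) (α (β (β a)))) := by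
          rw [hassoc (β (star x y)) z (β (β a))]
    _ = star (star b (star (β (star x y)) z)) (α (α (β (β a)))) := by
          rw [hassoc b (star (β (star x y)) z) (α (β (β a)))]
    _ = star (star b (star (β (star x y)) z)) (α (β a)) := by rw [hβ (β a)]
    _ = star (star b (star (β (star x y)) z)) a := by rw [hβ a]
end

section
/- Let (A, ⋆, α) be a hom-associative magma with α surjective. Then either A is strongly degenerate (there exist a ≠ b with x ⋆ a = x ⋆ b and a ⋆ x = b ⋆ x for all x), or A is a twist: there exists an associative binary operation · on A such that x ⋆ y = α(x · y) for all x, y ∈ A. -/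
theorem homAssoc_twist_or_degenerate {A : Type*} (star : A → A → A) (α : A → A)
    (hassoc : ∀ x y z, star (α x) (star y z) = star (star x y) (α z))
    (hsurj : Function.Surjective α) :
    (∃ a b : A, a ≠ b ∧ (∀ x, star x a = star x b) ∧ (∀ x, star a x = star b x)) ∨
    (∃ mul : A → A → A, (∀ x y z, mul (mul x y) z = mul x (mul y z)) ∧
      ∀ x y, star x y = α (mul x y)) := by
  classical
  obtain ⟨β, hβ⟩ : ∃ β : A → A, ∀ s, α (β s) = s :=
    ⟨Function.surjInv hsurj, Function.surjInv_eq hsurj⟩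
  -- derived forms of hom-associativity using the section β
  have R1 : ∀ L Y Z, star L (star Y Z) = star (star (β L) Y) (α Z) := by
    intro L Y Z
    have h := hassoc (β L) Y Z
    rwa [hβ] at h
  have R2 : ∀ X Y R, star (star X Y) R = star (α X) (star Y (β R)) := by
    intro X Y R
    have h := (hassoc X Y (β R)).symm
    rwa [hβ] at h
  by_cases hT : ∀ x y z, star (β (star x y)) z = star x (β (star y z))
  · right
    refine ⟨fun a b => β (star a b), ?_, ?_⟩
    · intro x y z
      simp only []
      rw [hT x y z]
    · intro x y
      rw [hβ]
  · left
    push_neg at hT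
    obtain ⟨x, y, z, hpq⟩ := hT
    set p := star (β (star x y)) z with hp
    set q := star x (β (star y z)) with hq
    -- basic product expansions
    have key1 : ∀ s, star p s = star (star x y) (star z (β s)) := by
      intro s
      rw [hp, R2, hβ]
    have key1' : ∀ s, star q s = star (α x) (star (β (star y z)) (β s)) := by
      intro s
      rw [hq, R2]
    have key_sp : ∀ s, star s p = star (star (β s) (β (star x y))) (α z) := by
      intro s
      rw [hp, R1]
    have key_sq : ∀ s, star s q = star (star (β s) x) (star y z) := by
      intro s
      rw [hq, R1, hβ]
    -- Claim A: right multiplications of (p⋆s) and (q⋆s) agree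
    have claimA : ∀ s t, star (star p s) t = star (star q s) t := by
      intro s t
      calc star (star p s) t
          = star (star (star x y) (star z (β s))) t := by rw [key1]
        _ = star (α (star x y)) (star (star z (β s)) (β t)) := R2 _ _ _
        _ = star (α (star x y)) (star (α z) (star (β s) (β (β t)))) := by
              rw [R2 z (β s) (β t)]
        _ = star (star (star x y) (α z)) (α (star (β s) (β (β t)))) := hassoc _ _ _
        _ = star (star (α x) (star y z)) (α (star (β s) (β (β t)))) := by
              rw [← hassoc x y z]
        _ = star (α (α x)) (star (star y z) (star (β s) (β (β t)))) := (hassoc _ _ _).symm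
        _ = star (α (α x)) (star (α (β (star y z))) (star (β s) (β (β t)))) := by rw [hβ]
        _ = star (α (α x)) (star (star (β (star y z)) (β s)) (β t)) := by
              rw [R2 (β (star y z)) (β s) (β t)]
        _ = star (star (α x) (star (β (star y z)) (β s))) t := (R2 _ _ _).symm
        _ = star (star q s) t := by rw [key1']
    -- Claim B: left multiplications of (p⋆s) and (q⋆s) agree
    have claimB : ∀ s t, star t (star p s) = star t (star q s) := by
      intro s t
      calc star t (star p s)
          = star t (star (star x y) (star z (β s))) := by rw [key1]
        _ = star (star (β t) (star x y)) (α (star z (β s))) := R1 _ _ _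
        _ = star (star (star (β (β t)) x) (α y)) (α (star z (β s))) := by
              rw [R1 (β t) x y]
        _ = star (α (star (β (β t)) x)) (star (α y) (star z (β s))) := (hassoc _ _ _).symm
        _ = star (α (star (β (β t)) x)) (star (star y z) (α (β s))) := by
              rw [hassoc y z (β s)]
        _ = star (α (star (β (β t)) x)) (star (star y z) s) := by rw [hβ]
        _ = star (star (star (β (β t)) x) (star y z)) (α s) := hassoc _ _ _
        _ = star (star (star (β (β t)) x) (α (β (star y z)))) (α s) := by rw [hβ]
        _ = star (star (β t) (star x (β (star y z)))) (α s) := by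
              rw [← R1 (β t) x (β (star y z))]
        _ = star (star (β t) q) (α s) := by rw [← hq]
        _ = star t (star q s) := (R1 t q s).symm
    -- Claim C: right multiplications of (s⋆p) and (s⋆q) agree
    have claimC : ∀ s t, star (star s p) t = star (star s q) t := by
      intro s t
      calc star (star s p) t
          = star (α s) (star p (β t)) := R2 s p t
        _ = star (α s) (star (star x y) (star z (β (β t)))) := by rw [key1 (β t)]
        _ = star (star s (star x y)) (α (star z (β (β t)))) := hassoc _ _ _
        _ = star (star (star (β s) x) (α y)) (α (star z (β (β t)))) := by rw [R1 s x y]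
        _ = star (α (star (β s) x)) (star (α y) (star z (β (β t)))) := (hassoc _ _ _).symm
        _ = star (α (star (β s) x)) (star (star y z) (α (β (β t)))) := by
              rw [hassoc y z (β (β t))]
        _ = star (α (star (β s) x)) (star (star y z) (β t)) := by rw [hβ]
        _ = star (star (star (β s) x) (star y z)) t := (R2 _ _ _).symm
        _ = star (star s q) t := by rw [← key_sq]
    -- Claim D: left multiplications of (s⋆p) and (s⋆q) agree
    have claimD : ∀ s t, star t (star s p) = star t (star s q) := by
      intro s t
      calc star t (star s p)
          = star t (star (star (β s) (β (star x y))) (α z)) := by rw [key_sp]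
        _ = star (star (β t) (star (β s) (β (star x y)))) (α (α z)) := R1 _ _ _
        _ = star (star (star (β (β t)) (β s)) (α (β (star x y)))) (α (α z)) := by
              rw [R1 (β t) (β s) (β (star x y))]
        _ = star (star (star (β (β t)) (β s)) (star x y)) (α (α z)) := by rw [hβ]
        _ = star (α (star (β (β t)) (β s))) (star (star x y) (α z)) := (hassoc _ _ _).symm
        _ = star (α (star (β (β t)) (β s))) (star (α x) (star y z)) := by
              rw [← hassoc x y z]
        _ = star (star (star (β (β t)) (β s)) (α x)) (α (star y z)) := hassoc _ _ _
        _ = star (star (β t) (star (β s) x)) (α (star y z)) := by rw [← R1 (β t) (β s) x]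
        _ = star t (star (star (β s) x) (star y z)) := (R1 _ _ _).symm
        _ = star t (star s q) := by rw [← key_sq]
    -- now the case analysis
    by_cases hA : ∃ w, star p w ≠ star q w
    · obtain ⟨w, hw⟩ := hA
      exact ⟨star p w, star q w, hw, fun t => claimB w t, fun t => claimA w t⟩
    · by_cases hB : ∃ w, star w p ≠ star w q
      · obtain ⟨w, hw⟩ := hB
        exact ⟨star w p, star w q, hw, fun t => claimD w t, fun t => claimC w t⟩
      · push_neg at hA hB
        exact ⟨p, q, hpq, fun t => hB t, fun t => hA t⟩
end

section
/- Let (A, ⋆, α) be a hom-associative magma with α surjective and suppose A is not strongly degenerate (there do not exist a ≠ b with x ⋆ a = x ⋆ b and a ⋆ x = b ⋆ x for all x). Then α is injective, hence bijective. -/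
theorem homAssoc_surjective_bijective {A : Type*} (star : A → A → A) (α : A → A)
    (hassoc : ∀ x y z, star (α x) (star y z) = star (star x y) (α z))
    (hsurj : Function.Surjective α)
    (hnd : ¬ ∃ a b : A, a ≠ b ∧ (∀ x, star x a = star x b) ∧ (∀ x, star a x = star b x)) :
    Function.Bijective α := by
  -- reformulate hnd as an extensionality principle
  have hext : ∀ a b : A, (∀ x, star x a = star x b) → (∀ x, star a x = star b x) → a = b := by
    intro a b h1 h2
    by_contra hne
    exact hnd ⟨a, b, hne, h1, h2⟩
  constructor
  · -- injectivity
    intro a b hab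
    -- (I): ∀ w y, star w (star y a) = star w (star y b)
    have hI : ∀ w y, star w (star y a) = star w (star y b) := by
      intro w y
      obtain ⟨u, rfl⟩ := hsurj w
      rw [hassoc, hassoc, hab]
    -- (II): ∀ y w, star (star a y) w = star (star b y) w
    have hII : ∀ y w, star (star a y) w = star (star b y) w := by
      intro y w
      obtain ⟨v, rfl⟩ := hsurj w
      rw [← hassoc, ← hassoc, hab]
    -- (P): ∀ u v, star (star u a) (α v) = star (star u b) (α v)
    have hP : ∀ u v, star (star u a) (α v) = star (star u b) (α v) := by
      intro u v
      apply hext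
      · intro w
        obtain ⟨t, rfl⟩ := hsurj w
        rw [hassoc, hassoc, hI]
      · intro w
        obtain ⟨t, rfl⟩ := hsurj w
        rw [← hassoc u a v, ← hassoc (α u) (star a v) t, hII v t,
          hassoc (α u) (star b v) t, hassoc u b v]
    -- ∀ u, star u a = star u b
    have hL : ∀ u, star u a = star u b := by
      intro u
      apply hext
      · intro w
        exact hI w u
      · intro w
        obtain ⟨v, rfl⟩ := hsurj w
        exact hP u v
    -- ∀ v, star a v = star b v
    have hR : ∀ v, star a v = star b v := by
      intro v
      apply hext
      · intro w
        obtain ⟨u, rfl⟩ := hsurj w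
        rw [hassoc, hassoc, hP]
      · intro w
        exact hII v w
    exact hext a b hL hR
  · exact hsurj
end

section
/- Let (A, ⋆, α, 1) be a hom-associative magma with a two-sided unit (1 ⋆ x = x ⋆ 1 = x for all x) and α bijective. Then (A, ⋆) is not strongly degenerate, and hence A is a twist of an associative structure. -/
theorem homAssoc_unital_bijective_twist {A : Type*} (star : A → A → A) (α : A → A) (e : A)
    (hassoc : ∀ x y z, star (α x) (star y z) = star (star x y) (α z))
    (hunit : ∀ x, star e x = x ∧ star x e = x)
    (hbij : Function.Bijective α) :
    (¬ ∃ a b : A, a ≠ b ∧ (∀ x, star x a = star x b) ∧ (∀ x, star a x = star b x)) ∧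
    (∃ mul : A → A → A, (∀ x y z, mul (mul x y) z = mul x (mul y z)) ∧
      ∀ x y, star x y = α (mul x y)) := by
  have hl : ∀ x, star e x = x := fun x => (hunit x).1
  have hr : ∀ x, star x e = x := fun x => (hunit x).2
  constructor
  · rintro ⟨a, b, hab, h1, -⟩
    exact hab (by rw [← hl a, h1 e, hl b])
  · -- α x = x ⋆ α e = α e ⋆ x
    have hαr : ∀ x, α x = star x (α e) := fun x => by
      have := hassoc x e e; rwa [hl, hr, hr] at this
    have hαl : ∀ x, α x = star (α e) x := fun x => by
      have := hassoc e e x; rw [hl, hr, hl] at this; exact this.symm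
    have hmul1 : ∀ x y, α (star x y) = star x (α y) := fun x y => by
      have := hassoc e x y; rwa [hl, ← hαl] at this
    have hmul2 : ∀ x y, α (star x y) = star (α x) y := fun x y => by
      have := hassoc x y e; rw [hr, ← hαr] at this; exact this.symm
    let β := Equiv.ofBijective α hbij
    have hβ : ∀ x, α (β.symm x) = x := fun x => β.apply_symm_apply x
    have hβ' : ∀ x, β.symm (α x) = x := fun x => β.symm_apply_apply x
    refine ⟨fun x y => β.symm (star x y), ?_, fun x y => (hβ _).symm⟩
    intro x y z
    dsimp only
    have e1 : β.symm (star x y) = star (β.symm x) y := by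
      apply hbij.1; rw [hβ, hmul2, hβ]
    have e2 : ∀ x y, β.symm (star x y) = star x (β.symm y) := fun x y => by
      apply hbij.1; rw [hβ, hmul1, hβ]
    have h3 := hassoc (β.symm x) y (β.symm z)
    rw [hβ, hβ] at h3
    rw [e1, ← h3, ← e2 y z]
end

section
/- Let (A, ⋆, α) be a hom-associative k-algebra over a commutative ring k, with (A, ⋆) not strongly degenerate, and let (A[[t]], μ_t, α_t) be a formal hom-associative deformation of (A, ⋆, α). Then (A[[t]], μ_t) is not strongly degenerate as a k[[t]]-algebra: for every nonzero a ∈ A[[t]] there exists b ∈ A with μ_t(b, a) ≠ 0 or μ_t(a, b) ≠ 0. -/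
theorem deformation_preserves_nondegeneracy
    {k : Type*} [CommRing k] {A : Type*} [AddCommGroup A] [Module k A]
    (μfam : ℕ → (A →ₗ[k] A →ₗ[k] A)) (αfam : ℕ → (A →ₗ[k] A))
    -- (A, ⋆, α) with ⋆ = μfam 0, α = αfam 0, hom-associative:
    (hassoc : ∀ x y z : A, μfam 0 (αfam 0 x) (μfam 0 y z) = μfam 0 (μfam 0 x y) (αfam 0 z))
    -- (A, ⋆) not strongly degenerate:
    (hnd : ∀ a : A, a ≠ 0 → ∃ b : A, μfam 0 b a ≠ 0 ∨ μfam 0 a b ≠ 0)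
    -- deformed multiplication μ_t and twisting α_t on A[[t]] = (ℕ → A):
    (M : (ℕ → A) → (ℕ → A) → (ℕ → A)) (F : (ℕ → A) → (ℕ → A))
    (hM : ∀ a b n, M a b n =
      ∑ i ∈ Finset.range (n + 1), ∑ j ∈ Finset.range (n - i + 1),
        μfam i (a j) (b (n - i - j)))
    (hF : ∀ a n, F a n = ∑ i ∈ Finset.range (n + 1), αfam i (a (n - i)))
    -- hom-associativity of the deformation:
    (hdef : ∀ a b c : ℕ → A, M (F a) (M b c) = M (M a b) (F c)) :
    ∀ a : ℕ → A, a ≠ 0 →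
      ∃ b : A, M (fun n => if n = 0 then b else 0) a ≠ 0 ∨
        M a (fun n => if n = 0 then b else 0) ≠ 0 := by
  classical
  intro a ha
  have hex : ∃ n, a n ≠ 0 := by
    by_contra h
    push_neg at h
    exact ha (funext h)
  set N := Nat.find hex with hNdef
  have hN : a N ≠ 0 := Nat.find_spec hex
  have hlt : ∀ m, m < N → a m = 0 := by
    intro m hm
    by_contra h
    exact absurd (Nat.find_le h) (not_le.mpr hm)
  obtain ⟨b, hb⟩ := hnd (a N) hN
  refine ⟨b, ?_⟩
  have hmem : ∀ i, i ∈ Finset.range (N + 1) → i ≠ 0 → a (N - i) = 0 := by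
    intro i hi h0
    apply hlt
    exact Nat.sub_lt (Nat.lt_of_lt_of_le (Nat.pos_of_ne_zero h0)
      (Nat.lt_succ_iff.mp (Finset.mem_range.mp hi))) (Nat.pos_of_ne_zero h0)
  have key1 : M (fun n => if n = 0 then b else 0) a N = μfam 0 b (a N) := by
    rw [hM]
    have h1 : ∀ i ∈ Finset.range (N + 1),
        (∑ j ∈ Finset.range (N - i + 1),
          μfam i ((fun n => if n = 0 then b else 0) j) (a (N - i - j)))
        = μfam i b (a (N - i)) := by
      intro i _
      rw [Finset.sum_eq_single 0]
      · simp
      · intro j _ hj; simp [hj]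
      · intro h; exact absurd (Finset.mem_range.mpr (Nat.succ_pos _)) h
    rw [Finset.sum_congr rfl h1, Finset.sum_eq_single 0]
    · simp
    · intro i hi hi0
      rw [hmem i hi hi0]; simp
    · intro h; exact absurd (Finset.mem_range.mpr (Nat.succ_pos _)) h
  have key2 : M a (fun n => if n = 0 then b else 0) N = μfam 0 (a N) b := by
    rw [hM]
    have h1 : ∀ i ∈ Finset.range (N + 1),
        (∑ j ∈ Finset.range (N - i + 1),
          μfam i (a j) ((fun n => if n = 0 then b else 0) (N - i - j)))
        = μfam i (a (N - i)) b := by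
      intro i _
      rw [Finset.sum_eq_single (N - i)]
      · simp
      · intro j hj hjne
        have : N - i - j ≠ 0 := by
          have hjle : j ≤ N - i := Nat.lt_succ_iff.mp (Finset.mem_range.mp hj)
          omega
        simp [this]
      · intro h; exact absurd (Finset.mem_range.mpr (Nat.lt_succ_self _)) h
    rw [Finset.sum_congr rfl h1, Finset.sum_eq_single 0]
    · simp
    · intro i hi hi0
      rw [hmem i hi hi0]; simp
    · intro h; exact absurd (Finset.mem_range.mpr (Nat.succ_pos _)) h
  rcases hb with hb | hb
  · left
    intro h
    exact hb (by rw [← key1, h]; rfl)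
  · right
    intro h
    exact hb (by rw [← key2, h]; rfl)
end
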